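/- Specializing to d = 2: define (c_1(t), c_2(t)) by c(0) = (0,0) and c(t) = M(x_t)·c(t-1) + η(x_t) where M(α) is the 2×2 matrix with entries μ_{i,j}(α) and η(α) = (η_1(α), η_2(α)). Then c_1(t) and c_2(t) are each computed by a 4-state WFSA over the real semiring (the two automata D_1 and D_2 share all weights and differ only in which state is final). -/

import Mathlib

/-- Transition weights of the four-state WFSAs `D₁, D₂` (states
`0 = q1, 1 = q2, 2 = q3, 3 = q4`): self-loops of weight `1` on `q1` and `q4`;
`q1 → q2` with weight `η1 a`, `q4 → q3` with weight `η2 a`;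
`q2 → q2` weight `μ11 a`, `q2 → q3` weight `μ21 a`, `q3 → q2` weight `μ12 a`,
`q3 → q3` weight `μ22 a`. -/
def dTau {A : Type*} (μ11 μ12 μ21 μ22 η1 η2 : A → ℝ) : Fin 4 → Fin 4 → A → ℝ :=
  fun q q' a =>
  if q = 0 ∧ q' = 0 then 1
  else if q = 3 ∧ q' = 3 then 1
  else if q = 0 ∧ q' = 1 then η1 a
  else if q = 3 ∧ q' = 2 then η2 a
  else if q = 1 ∧ q' = 1 then μ11 a
  else if q = 1 ∧ q' = 2 then μ21 a
  else if q = 2 ∧ q' = 1 then μ12 a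
  else if q = 2 ∧ q' = 2 then μ22 a
  else 0

/-- Initial weights of `D₁, D₂`: `q1` and `q4` are initial with weight `1`. -/
def dLam : Fin 4 → ℝ := fun q => if q = 0 ∨ q = 3 then 1 else 0

/-- Score of the prefix `x_1 … x_t` under the four-state WFSA with transitions
`dTau`, initial weights `dLam`, and final weight `1` on state `qf`: the sum
over all accepting paths of the product of weights. -/
noncomputable def dScore {A : Type*} (μ11 μ12 μ21 μ22 η1 η2 : A → ℝ)
    (qf : Fin 4) (x : ℕ → A) (t : ℕ) : ℝ :=
  ∑ p : Fin (t + 1) → Fin 4,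
    dLam (p 0) *
      (∏ i : Fin t, dTau μ11 μ12 μ21 μ22 η1 η2 (p i.castSucc) (p i.succ) (x (i.1 + 1))) *
      (if p (Fin.last t) = qf then (1 : ℝ) else 0)

lemma dScore_zero {A : Type*} (μ11 μ12 μ21 μ22 η1 η2 : A → ℝ) (qf : Fin 4) (x : ℕ → A) :
    dScore μ11 μ12 μ21 μ22 η1 η2 qf x 0 = dLam qf := by
  rw [dScore, ← Equiv.sum_comp (Equiv.funUnique (Fin 1) (Fin 4)).symm]
  simp

lemma dScore_succ {A : Type*} (μ11 μ12 μ21 μ22 η1 η2 : A → ℝ)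
    (qf : Fin 4) (x : ℕ → A) (t : ℕ) :
    dScore μ11 μ12 μ21 μ22 η1 η2 qf x (t + 1) =
      ∑ r : Fin 4, dScore μ11 μ12 μ21 μ22 η1 η2 r x t *
        dTau μ11 μ12 μ21 μ22 η1 η2 r qf (x (t + 1)) := by
  classical
  have key : ∀ qf', dScore μ11 μ12 μ21 μ22 η1 η2 qf' x (t+1) =
      ∑ p' : Fin (t+1) → Fin 4, dLam (p' 0) *
        (∏ i : Fin t, dTau μ11 μ12 μ21 μ22 η1 η2 (p' i.castSucc) (p' i.succ) (x (i.1 + 1))) *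
        dTau μ11 μ12 μ21 μ22 η1 η2 (p' (Fin.last t)) qf' (x (t + 1)) := by
    intro qf'
    rw [dScore, ← Equiv.sum_comp (Fin.snocEquiv (fun _ : Fin (t+1+1) => Fin 4)),
      Fintype.sum_prod_type]
    rw [Finset.sum_comm]
    refine Finset.sum_congr rfl fun p' _ => ?_
    simp only [Fin.snocEquiv, Equiv.coe_fn_mk, Fin.snoc_last]
    rw [Fintype.sum_eq_single qf' (by intro r hr; simp [hr])]
    simp only [if_true, mul_one]
    have hprod : (∏ i : Fin (t+1), dTau μ11 μ12 μ21 μ22 η1 η2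
          ((Fin.snoc p' qf' : Fin (t+1+1) → Fin 4) i.castSucc) ((Fin.snoc p' qf' : Fin (t+1+1) → Fin 4) i.succ) (x (i.1 + 1))) =
        (∏ i : Fin t, dTau μ11 μ12 μ21 μ22 η1 η2 (p' i.castSucc) (p' i.succ) (x (i.1 + 1))) *
          dTau μ11 μ12 μ21 μ22 η1 η2 (p' (Fin.last t)) qf' (x (t + 1)) := by
      rw [Fin.prod_univ_castSucc]
      simp [Fin.succ_castSucc, Fin.succ_last, -Fin.castSucc_succ]
    rw [show (0 : Fin (t+1+1)) = Fin.castSucc 0 from rfl, Fin.snoc_castSucc, hprod, ← mul_assoc]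
  rw [key]
  simp only [dScore, Finset.sum_mul]
  rw [Finset.sum_comm]
  refine Finset.sum_congr rfl fun p' _ => ?_
  rw [Fintype.sum_eq_single (p' (Fin.last t)) (by intro r hr; simp [Ne.symm hr])]
  simp

/-- Two-dimensional ISAN: with `c(0) = (0,0)` and
`c(t) = M(x_t)·c(t-1) + η(x_t)` where `M(a)` has entries `μ_{i,j}(a)`, the
coordinates `c_1(t)` and `c_2(t)` are computed respectively by the 4-state
WFSAs `D₁` (final state `q2`) and `D₂` (final state `q3`), which share all
weights and differ only in the final state. -/
theorem stmt10 {A : Type*} [Fintype A] (μ11 μ12 μ21 μ22 η1 η2 : A → ℝ)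
    (x : ℕ → A) (c1 c2 : ℕ → ℝ)
    (h10 : c1 0 = 0) (h20 : c2 0 = 0)
    (h1 : ∀ t, 1 ≤ t → c1 t = μ11 (x t) * c1 (t - 1) + μ12 (x t) * c2 (t - 1) + η1 (x t))
    (h2 : ∀ t, 1 ≤ t → c2 t = μ21 (x t) * c1 (t - 1) + μ22 (x t) * c2 (t - 1) + η2 (x t)) :
    ∀ t, c1 t = dScore μ11 μ12 μ21 μ22 η1 η2 1 x t ∧
         c2 t = dScore μ11 μ12 μ21 μ22 η1 η2 2 x t := by
  have key : ∀ t, dScore μ11 μ12 μ21 μ22 η1 η2 0 x t = 1 ∧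
      c1 t = dScore μ11 μ12 μ21 μ22 η1 η2 1 x t ∧
      c2 t = dScore μ11 μ12 μ21 μ22 η1 η2 2 x t ∧
      dScore μ11 μ12 μ21 μ22 η1 η2 3 x t = 1 := by
    intro t
    induction t with
    | zero => simp [dScore_zero, dLam, h10, h20]
    | succ t ih =>
      obtain ⟨i0, i1, i2, i3⟩ := ih
      refine ⟨?_, ?_, ?_, ?_⟩
      · rw [dScore_succ, Fin.sum_univ_four, i0, i3, ← i1, ← i2]
        simp (config := { decide := true }) [dTau, Nat.add_sub_cancel, Nat.add_sub_cancel_left]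
      · rw [dScore_succ, Fin.sum_univ_four, i0, i3, ← i1, ← i2,
          h1 (t+1) (by omega)]
        simp (config := { decide := true }) [dTau, Nat.add_sub_cancel, Nat.add_sub_cancel_left]
        ring
      · rw [dScore_succ, Fin.sum_univ_four, i0, i3, ← i1, ← i2,
          h2 (t+1) (by omega)]
        simp (config := { decide := true }) [dTau, Nat.add_sub_cancel, Nat.add_sub_cancel_left]
        ring
      · rw [dScore_succ, Fin.sum_univ_four, i0, i3, ← i1, ← i2]
        simp (config := { decide := true }) [dTau, Nat.add_sub_cancel, Nat.add_sub_cancel_left]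
  exact fun t => ⟨(key t).2.1, (key t).2.2.1⟩
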